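/- arXiv:2603.14135 — 2 statements merged into one kernel-verified Lean document; each statement's English description precedes it below -/
import Mathlib

section
/- Let x^{(1)},...,x^{(N)} ∈ R^d and let φ_1,...,φ_N: R^D → R be functions forming a partition of unity (∑_j φ_j(y) = 1 for all y) that are interpolatory at data points y^{(j)} (φ_j(y^{(i)}) = δ_{ij}). Define b_t(ξ,y) = ∑_j φ_j(y)(x^{(j)} - ξ)/(1-t). Then b_t(ξ,y) = (x̄(y) - ξ)/(1-t) where x̄(y) = ∑_j φ_j(y) x^{(j)}, and for each fixed y, every solution of dX_t/dt = b_t(X_t, y) on [0,1) satisfies X_t = (1-t)X_0 + t x̄(y), hence X_t → x̄(y) as t → 1. -/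
theorem stmt7 {d D N : ℕ} (x : Fin N → EuclideanSpace ℝ (Fin d))
    (y : Fin N → EuclideanSpace ℝ (Fin D)) (hy : Function.Injective y)
    (φ : Fin N → EuclideanSpace ℝ (Fin D) → ℝ)
    (hpu : ∀ yy, ∑ j, φ j yy = 1)
    (hinterp : ∀ i j, φ j (y i) = if i = j then 1 else 0)
    (b : ℝ → EuclideanSpace ℝ (Fin d) → EuclideanSpace ℝ (Fin D) → EuclideanSpace ℝ (Fin d))
    (hb : ∀ t ξ yy, b t ξ yy = ∑ j, φ j yy • ((1 - t)⁻¹ • (x j - ξ))) :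
    (∀ t ξ yy, b t ξ yy = (1 - t)⁻¹ • ((∑ j, φ j yy • x j) - ξ)) ∧
      ∀ (yy : EuclideanSpace ℝ (Fin D)) (X : ℝ → EuclideanSpace ℝ (Fin d)),
        (∀ t ∈ Set.Ico (0:ℝ) 1, HasDerivWithinAt X (b t (X t) yy) (Set.Ico (0:ℝ) 1) t) →
        (∀ t ∈ Set.Ico (0:ℝ) 1, X t = (1 - t) • X 0 + t • ∑ j, φ j yy • x j) ∧
          Filter.Tendsto X (nhdsWithin 1 (Set.Ico (0:ℝ) 1)) (nhds (∑ j, φ j yy • x j)) := by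
  have hbform : ∀ t ξ yy, b t ξ yy = (1 - t)⁻¹ • ((∑ j, φ j yy • x j) - ξ) := by
    intro t ξ yy
    rw [hb]
    have h1 : ∀ j : Fin N, φ j yy • ((1 - t)⁻¹ • (x j - ξ))
        = (1 - t)⁻¹ • (φ j yy • x j) - (φ j yy • ((1 - t)⁻¹ • ξ)) := fun j => by module
    simp_rw [h1]
    rw [Finset.sum_sub_distrib, ← Finset.sum_smul, hpu, one_smul, smul_sub, Finset.smul_sum]
  refine ⟨hbform, ?_⟩
  intro yy X hX
  set xb : EuclideanSpace ℝ (Fin d) := ∑ j, φ j yy • x j with hxb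
  -- The auxiliary function Z is constant
  set Z : ℝ → EuclideanSpace ℝ (Fin d) := fun t => (1 - t)⁻¹ • (X t - xb) with hZ
  have hZderiv : ∀ t ∈ Set.Ico (0:ℝ) 1,
      HasDerivWithinAt Z 0 (Set.Ico (0:ℝ) 1) t := by
    intro t ht
    have ht1 : (1 : ℝ) - t ≠ 0 := by
      have := ht.2; intro h; linarith [ht.2]
    have hf : HasDerivWithinAt (fun s : ℝ => (1 - s)⁻¹) (((1 - t)^2)⁻¹)
        (Set.Ico (0:ℝ) 1) t := by
      have h1 : HasDerivWithinAt (fun s : ℝ => 1 - s) (-1) (Set.Ico (0:ℝ) 1) t := by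
        simpa using ((hasDerivAt_id t).const_sub 1).hasDerivWithinAt
      have := h1.inv ht1
      convert this using 1
      · rfl
      · rfl
      · rfl
      field_simp
    have hg : HasDerivWithinAt (fun s => X s - xb) (b t (X t) yy) (Set.Ico (0:ℝ) 1) t :=
      (hX t ht).sub_const xb
    have := hf.smul hg
    convert this using 1
    · rfl
    · rfl
    · rfl
    · rfl
    rw [hbform]
    rw [smul_smul, ← mul_inv, ← sq]
    rw [smul_sub, smul_sub]
    abel
  have hZconst : ∀ t ∈ Set.Ico (0:ℝ) 1, Z t = Z 0 := by
    intro t ht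
    have hconv : Convex ℝ (Set.Ico (0:ℝ) 1) := convex_Ico 0 1
    have hdiff : ∀ s ∈ Set.Ico (0:ℝ) 1, HasFDerivWithinAt Z
        (0 : ℝ →L[ℝ] EuclideanSpace ℝ (Fin d)) (Set.Ico (0:ℝ) 1) s := by
      intro s hs
      have h0 : (ContinuousLinearMap.smulRight (1 : ℝ →L[ℝ] ℝ)
          (0 : EuclideanSpace ℝ (Fin d))) = 0 := by ext z; simp
      exact h0 ▸ (hZderiv s hs).hasFDerivWithinAt
    exact hconv.is_const_of_fderivWithin_eq_zero
      (fun s hs => (hdiff s hs).differentiableWithinAt)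
      (fun s hs => (hdiff s hs).fderivWithin (uniqueDiffOn_Ico 0 1 s hs))
      ht (Set.left_mem_Ico.mpr zero_lt_one)
  have hXeq : ∀ t ∈ Set.Ico (0:ℝ) 1, X t = (1 - t) • X 0 + t • xb := by
    intro t ht
    have ht1 : (1 : ℝ) - t ≠ 0 := by intro h; linarith [ht.2]
    have h0 : Z 0 = X 0 - xb := by simp [hZ]
    have := hZconst t ht
    rw [h0, hZ] at this
    have h2 : X t - xb = (1 - t) • (X 0 - xb) := by
      have := congrArg (fun v => (1 - t) • v) this
      simpa [smul_smul, mul_inv_cancel₀ ht1] using this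
    have h3 := congrArg (fun v => v + xb) h2
    simp only [sub_add_cancel] at h3
    rw [h3]; rw [smul_sub]; module
  refine ⟨hXeq, ?_⟩
  have hcont : Filter.Tendsto (fun t : ℝ => (1 - t) • X 0 + t • xb)
      (nhdsWithin 1 (Set.Ico (0:ℝ) 1)) (nhds xb) := by
    have hc : Continuous (fun t : ℝ => (1 - t) • X 0 + t • xb) := by fun_prop
    have := (hc.tendsto 1).mono_left (nhdsWithin_le_nhds (s := Set.Ico (0:ℝ) 1))
    simpa using this
  refine Filter.Tendsto.congr' ?_ hcont
  filter_upwards [self_mem_nhdsWithin] with t ht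
  exact (hXeq t ht).symm
end

section
/- Suppose N training pairs (x^{(i)}, y^{(i)}) are given and the velocity field is constrained to the form b_t(ξ,y) = ∑_k φ_k(y) b_{t,k}(ξ), where the functions φ_k satisfy φ_j(y^{(i)}) = δ_{ij} and ∑_j φ_j = 1. If ρ_Z > 0 everywhere, the minimizer of the empirical loss ∑_i ∫_0^1 ∫ |b_t(I_t(z, x^{(i)}), y^{(i)}) - (x^{(i)} - z)|^2 ρ_Z(z) dz dt over coefficients b_{t,k} is b_{t,j}(ξ) = (x^{(j)} - ξ)/(1-t), and therefore the minimizing velocity is b_t*(ξ, y) = (∑_j φ_j(y) x^{(j)} - ξ)/(1-t). -/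
open MeasureTheory

theorem stmt12 {d D N : ℕ} (x : Fin N → EuclideanSpace ℝ (Fin d))
    (y : Fin N → EuclideanSpace ℝ (Fin D))
    (φ : Fin N → EuclideanSpace ℝ (Fin D) → ℝ)
    (hinterp : ∀ i j, φ j (y i) = if i = j then 1 else 0)
    (hpu : ∀ yy, ∑ j, φ j yy = 1)
    (ρZ : EuclideanSpace ℝ (Fin d) → ℝ) (hρZ : ∀ z, 0 < ρZ z) (hρZm : Measurable ρZ)
    (L : (Fin N → ℝ → EuclideanSpace ℝ (Fin d) → EuclideanSpace ℝ (Fin d)) → ℝ)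
    (hL : ∀ c, L c = ∑ i, ∫ t in Set.Ioo (0:ℝ) 1, ∫ z,
      ‖(∑ k, φ k (y i) • c k t ((1 - t) • z + t • x i)) - (x i - z)‖ ^ 2 * ρZ z)
    (cstar : Fin N → ℝ → EuclideanSpace ℝ (Fin d) → EuclideanSpace ℝ (Fin d))
    (hcstar : ∀ j t ξ, cstar j t ξ = (1 - t)⁻¹ • (x j - ξ)) :
    (∀ c : Fin N → ℝ → EuclideanSpace ℝ (Fin d) → EuclideanSpace ℝ (Fin d),
      (∀ k t, Measurable (c k t)) → L cstar ≤ L c) ∧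
      ∀ t ξ yy, ∑ k, φ k yy • cstar k t ξ = (1 - t)⁻¹ • ((∑ j, φ j yy • x j) - ξ) := by
  constructor
  · intro c _
    have hzero : L cstar = 0 := by
      rw [hL]
      apply Finset.sum_eq_zero
      intro i _
      have h1 : Set.EqOn
          (fun t => ∫ z, ‖(∑ k, φ k (y i) • cstar k t ((1 - t) • z + t • x i))
            - (x i - z)‖ ^ 2 * ρZ z) (fun _ => (0:ℝ)) (Set.Ioo 0 1) := by
        intro t ht
        have hne : (1 : ℝ) - t ≠ 0 := sub_ne_zero.mpr (ne_of_gt ht.2)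
        have inner : ∀ z, ‖(∑ k, φ k (y i) • cstar k t ((1 - t) • z + t • x i))
            - (x i - z)‖ ^ 2 * ρZ z = 0 := by
          intro z
          have hsum : (∑ k, φ k (y i) • cstar k t ((1 - t) • z + t • x i))
              = cstar i t ((1 - t) • z + t • x i) := by
            rw [Finset.sum_eq_single i]
            · rw [hinterp i i]; simp
            · intro b _ hb
              rw [hinterp i b, if_neg (by exact fun h => hb h.symm)]; simp
            · simp
          rw [hsum, hcstar]
          have hx : x i - ((1 - t) • z + t • x i) = (1 - t) • (x i - z) := by
            module
          rw [hx, smul_smul, inv_mul_cancel₀ hne, one_smul, sub_self]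
          simp
        simp only [inner, integral_zero]
      rw [setIntegral_congr_fun measurableSet_Ioo h1, integral_zero]
    rw [hzero, hL]
    apply Finset.sum_nonneg
    intro i _
    apply setIntegral_nonneg measurableSet_Ioo
    intro t _
    apply integral_nonneg
    intro z
    have := (hρZ z).le
    positivity
  · intro t ξ yy
    simp only [hcstar]
    have : ∀ k : Fin N, φ k yy • (1 - t)⁻¹ • (x k - ξ)
        = (1 - t)⁻¹ • (φ k yy • (x k - ξ)) := fun k => smul_comm _ _ _
    simp only [this, ← Finset.smul_sum]
    congr 1
    simp only [smul_sub, Finset.sum_sub_distrib, ← Finset.sum_smul, hpu yy, one_smul]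
end
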